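/- Let W ∈ ℝ^{m×n} and suppose the cone K_W generated by the rows of W is pointed. Then ConeGeneratingRank(W) = ConeSubsetRank(W). -/

import Mathlib

/-- The polyhedral cone generated by the rows of a matrix `W`:
the set of nonnegative linear combinations `λᵀ W` of the rows of `W`. -/
def coneOf {m n : ℕ} (W : Matrix (Fin m) (Fin n) ℝ) : Set (Fin n → ℝ) :=
  {x | ∃ l : Fin m → ℝ, 0 ≤ l ∧ x = Matrix.vecMul l W}

/-- `ConeSubsetRank(W)`: the minimum `k` such that there exists `V ∈ ℝ^{k×n}` whose rows
are all rows of `W` and with `K_V = K_W`. -/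
noncomputable def coneSubsetRank {m n : ℕ} (W : Matrix (Fin m) (Fin n) ℝ) : ℕ :=
  sInf {k : ℕ | ∃ V : Matrix (Fin k) (Fin n) ℝ,
    (∀ i : Fin k, ∃ i' : Fin m, V i = W i') ∧ coneOf V = coneOf W}

/-- `ConeGeneratingRank(W)`: the minimum `k` such that there exists `V ∈ ℝ^{k×n}`
with `K_V = K_W`. -/
noncomputable def coneGeneratingRank {m n : ℕ} (W : Matrix (Fin m) (Fin n) ℝ) : ℕ :=
  sInf {k : ℕ | ∃ V : Matrix (Fin k) (Fin n) ℝ, coneOf V = coneOf W}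

namespace ConeRankAux

variable {n : ℕ}

lemma vecMul_eq_sum' {k : ℕ} (l : Fin k → ℝ) (V : Matrix (Fin k) (Fin n) ℝ) :
    Matrix.vecMul l V = ∑ i, l i • V i := by
  funext j
  simp [Matrix.vecMul, dotProduct, Finset.sum_apply]

lemma mem_coneOf {k : ℕ} (V : Matrix (Fin k) (Fin n) ℝ) (x : Fin n → ℝ) :
    x ∈ coneOf V ↔ ∃ l : Fin k → ℝ, 0 ≤ l ∧ x = ∑ i, l i • V i := by
  simp [coneOf, vecMul_eq_sum']

lemma zero_mem {k : ℕ} (V : Matrix (Fin k) (Fin n) ℝ) : (0 : Fin n → ℝ) ∈ coneOf V :=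
  (mem_coneOf V 0).2 ⟨0, le_refl _, by simp⟩

lemma row_mem {k : ℕ} (V : Matrix (Fin k) (Fin n) ℝ) (i : Fin k) : V i ∈ coneOf V := by
  refine (mem_coneOf V _).2 ⟨fun j => if j = i then 1 else 0, ?_, ?_⟩
  · intro j; dsimp; split <;> norm_num
  · rw [Finset.sum_eq_single i (fun b _ hb => by simp [hb]) (by simp)]; simp

lemma smul_mem {k : ℕ} {V : Matrix (Fin k) (Fin n) ℝ} {c : ℝ} {x : Fin n → ℝ}
    (hc : 0 ≤ c) (hx : x ∈ coneOf V) : c • x ∈ coneOf V := by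
  obtain ⟨l, hl, rfl⟩ := (mem_coneOf V x).1 hx
  refine (mem_coneOf V _).2 ⟨c • l, fun j => mul_nonneg hc (hl j), ?_⟩
  rw [Finset.smul_sum]
  exact Finset.sum_congr rfl fun j _ => by simp [smul_smul]

lemma add_mem {k : ℕ} {V : Matrix (Fin k) (Fin n) ℝ} {x y : Fin n → ℝ}
    (hx : x ∈ coneOf V) (hy : y ∈ coneOf V) : x + y ∈ coneOf V := by
  obtain ⟨l, hl, rfl⟩ := (mem_coneOf V x).1 hx
  obtain ⟨l', hl', rfl⟩ := (mem_coneOf V y).1 hy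
  refine (mem_coneOf V _).2 ⟨l + l', fun j => add_nonneg (hl j) (hl' j), ?_⟩
  rw [← Finset.sum_add_distrib]
  exact Finset.sum_congr rfl fun j _ => by simp [add_smul]

lemma sum_mem {k : ℕ} {V : Matrix (Fin k) (Fin n) ℝ} {ι : Type*} (s : Finset ι)
    {f : ι → Fin n → ℝ} (hf : ∀ j ∈ s, f j ∈ coneOf V) : ∑ j ∈ s, f j ∈ coneOf V := by
  classical
  induction s using Finset.induction_on with
  | empty => simpa using zero_mem V
  | insert _ _ ha ih =>
    rw [Finset.sum_insert ha]
    exact add_mem (hf _ (Finset.mem_insert_self _ _))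
      (ih fun j hj => hf j (Finset.mem_insert_of_mem hj))

lemma coneOf_subset {k k' : ℕ} {U : Matrix (Fin k) (Fin n) ℝ}
    {V : Matrix (Fin k') (Fin n) ℝ} (h : ∀ i, U i ∈ coneOf V) :
    coneOf U ⊆ coneOf V := by
  intro x hx
  obtain ⟨l, hl, rfl⟩ := (mem_coneOf U x).1 hx
  exact sum_mem _ fun j _ => smul_mem (hl j) (h j)

variable {m : ℕ} {W : Matrix (Fin m) (Fin n) ℝ}
  (hp : ∀ x ∈ coneOf W, x ≠ 0 → -x ∉ coneOf W)

include hp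

lemma nonneg_of_smul_mem {u : Fin n → ℝ} (huK : u ∈ coneOf W) (hu0 : u ≠ 0)
    {t : ℝ} (ht : t • u ∈ coneOf W) : 0 ≤ t := by
  by_contra htneg
  push_neg at htneg
  have hxK : (-t) • u ∈ coneOf W := smul_mem (by linarith) huK
  have hx0 : (-t) • u ≠ 0 := smul_ne_zero (by linarith) hu0
  exact hp _ hxK hx0 (by simpa [neg_smul] using ht)

lemma add_eq_zero_both {p q : Fin n → ℝ} (hpK : p ∈ coneOf W) (hqK : q ∈ coneOf W)
    (h : p + q = 0) : p = 0 ∧ q = 0 := by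
  by_cases hq : q = 0
  · subst hq; simpa using h
  · exfalso
    have hpq : p = -q := eq_neg_of_add_eq_zero_left h
    exact hp q hqK hq (hpq ▸ hpK)

lemma sum_eq_zero_each {ι : Type*} (s : Finset ι) {f : ι → Fin n → ℝ}
    (hf : ∀ j ∈ s, f j ∈ coneOf W) (h0 : ∑ j ∈ s, f j = 0) : ∀ j ∈ s, f j = 0 := by
  classical
  induction s using Finset.induction_on with
  | empty => simp
  | @insert a s ha ih =>
    rw [Finset.sum_insert ha] at h0
    have hrest : ∑ j ∈ s, f j ∈ coneOf W :=
      sum_mem s fun j hj => hf j (Finset.mem_insert_of_mem hj)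
    obtain ⟨h1, h2⟩ := add_eq_zero_both hp (hf _ (Finset.mem_insert_self _ _)) hrest h0
    intro j hj
    rcases Finset.mem_insert.1 hj with rfl | hj'
    · exact h1
    · exact ih (fun j hj => hf j (Finset.mem_insert_of_mem hj)) h2 j hj'

lemma row_scaled {k : ℕ} (V : Matrix (Fin (k+1)) (Fin n) ℝ) (hVW : coneOf V = coneOf W)
    (i : Fin (k+1))
    (hnot : V i ∉ coneOf (Matrix.of fun j => V (i.succAbove j))) :
    ∃ (j : Fin m) (c : ℝ), 0 < c ∧ W j = c • V i := by
  classical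
  set D := coneOf (Matrix.of fun j => V (i.succAbove j)) with hD
  have hDK : D ⊆ coneOf W := by
    rw [← hVW]
    exact coneOf_subset fun j => row_mem V (i.succAbove j)
  have hVi0 : V i ≠ 0 := fun h => hnot (h ▸ zero_mem _)
  have hViK : V i ∈ coneOf W := hVW ▸ row_mem V i
  obtain ⟨lam, hlam, hsum⟩ := (mem_coneOf W (V i)).1 hViK
  have hWj : ∀ j, ∃ (b : ℝ) (d : Fin n → ℝ), 0 ≤ b ∧ d ∈ D ∧ W j = b • V i + d := by
    intro j
    have hWjV : W j ∈ coneOf V := hVW ▸ row_mem W j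
    obtain ⟨l, hl, hx⟩ := (mem_coneOf V (W j)).1 hWjV
    refine ⟨l i, ∑ t, l (i.succAbove t) • V (i.succAbove t), hl i, ?_, ?_⟩
    · exact (mem_coneOf _ _).2 ⟨fun t => l (i.succAbove t), fun t => hl _, rfl⟩
    · rw [hx, Fin.sum_univ_succAbove (fun t => l t • V t) i]
  choose b d hb hdD hWeq using hWj
  set a : ℝ := ∑ j, lam j * b j with ha
  set dd : Fin n → ℝ := ∑ j, lam j • d j with hdd
  have hddD : dd ∈ D := sum_mem _ fun j _ => smul_mem (hlam j) (hdD j)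
  have hdecomp : V i = a • V i + dd := by
    calc V i = ∑ j, lam j • W j := hsum
    _ = ∑ j, (lam j • (b j • V i) + lam j • d j) :=
        Finset.sum_congr rfl fun j _ => by rw [hWeq j, smul_add]
    _ = a • V i + dd := by
        rw [Finset.sum_add_distrib, ha, hdd]
        congr 1
        simp only [smul_smul]
        exact (Finset.sum_smul).symm
  have key : (1 - a) • V i = dd := by
    rw [sub_smul, one_smul, sub_eq_iff_eq_add, add_comm]
    exact hdecomp
  rcases lt_trichotomy a 1 with hlt | heq | hgt
  · exfalso
    have h1a : (0:ℝ) < 1 - a := by linarith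
    have : V i ∈ D := by
      have := smul_mem (V := Matrix.of fun j => V (i.succAbove j))
        (c := (1 - a)⁻¹) (inv_nonneg.2 h1a.le) hddD
      rw [← key, smul_smul, inv_mul_cancel₀ h1a.ne', one_smul] at this
      exact this
    exact hnot this
  · -- a = 1 : dd = 0, so each lam j • d j = 0
    have hdd0 : dd = 0 := by rw [← key, heq, sub_self, zero_smul]
    have heach : ∀ j ∈ Finset.univ, lam j • d j = (0 : Fin n → ℝ) :=
      sum_eq_zero_each hp Finset.univ
        (fun j _ => smul_mem (hlam j) (hDK (hdD j))) (hdd ▸ hdd0)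
    have hex : ∃ j, 0 < lam j * b j := by
      by_contra hno
      push_neg at hno
      have : a = 0 := by
        rw [ha]
        exact Finset.sum_eq_zero fun j _ =>
          le_antisymm (hno j) (mul_nonneg (hlam j) (hb j))
      rw [this] at heq; norm_num at heq
    obtain ⟨j, hj⟩ := hex
    have hlamj : lam j ≠ 0 := by
      intro h; rw [h, zero_mul] at hj; exact lt_irrefl 0 hj
    have hbj : 0 < b j := by
      rcases (hb j).lt_or_eq with h | h
      · exact h
      · exfalso; rw [← h, mul_zero] at hj; exact lt_irrefl 0 hj
    have hdj0 : d j = 0 := by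
      have := heach j (Finset.mem_univ j)
      rcases smul_eq_zero.1 this with h | h
      · exact absurd h hlamj
      · exact h
    exact ⟨j, b j, hbj, by rw [hWeq j, hdj0, add_zero]⟩
  · exfalso
    have : (0:ℝ) ≤ 1 - a :=
      nonneg_of_smul_mem hp hViK hVi0 (key ▸ hDK hddD)
    linarith

lemma exists_subset_rows :
    ∀ (g : ℕ) (V : Matrix (Fin g) (Fin n) ℝ), coneOf V = coneOf W →
      (∀ j, j < g → ∀ U : Matrix (Fin j) (Fin n) ℝ, coneOf U ≠ coneOf W) →
      ∃ V' : Matrix (Fin g) (Fin n) ℝ,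
        (∀ i, ∃ i', V' i = W i') ∧ coneOf V' = coneOf W := by
  intro g
  match g with
  | 0 => exact fun V hV _ => ⟨V, fun i => i.elim0, hV⟩
  | Nat.succ k =>
    intro V hVW hmin
    have hnot : ∀ i : Fin (k+1), V i ∉ coneOf (Matrix.of fun j => V (i.succAbove j)) := by
      intro i hi
      refine hmin k (Nat.lt_succ_self k) (Matrix.of fun j => V (i.succAbove j)) ?_
      rw [← hVW]
      apply Set.Subset.antisymm
      · exact coneOf_subset fun j => row_mem V (i.succAbove j)
      · refine coneOf_subset fun t => ?_
        by_cases ht : t = i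
        · exact ht ▸ hi
        · obtain ⟨j, hj⟩ := Fin.exists_succAbove_eq ht
          exact hj ▸ row_mem (Matrix.of fun j => V (i.succAbove j)) j
    have hrows : ∀ i : Fin (k+1), ∃ (j : Fin m) (c : ℝ), 0 < c ∧ W j = c • V i :=
      fun i => row_scaled hp V hVW i (hnot i)
    choose jj c hc hWc using hrows
    refine ⟨Matrix.of fun i => W (jj i), fun i => ⟨jj i, rfl⟩, ?_⟩
    rw [← hVW]
    apply Set.Subset.antisymm
    · refine coneOf_subset fun i => ?_
      show W (jj i) ∈ coneOf V
      rw [hWc i]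
      exact smul_mem (hc i).le (row_mem V i)
    · refine coneOf_subset fun i => ?_
      have : V i = (c i)⁻¹ • W (jj i) := by
        rw [hWc i, smul_smul, inv_mul_cancel₀ (hc i).ne', one_smul]
      rw [this]
      exact smul_mem (inv_nonneg.2 (hc i).le)
        (row_mem (Matrix.of fun i => W (jj i)) i)

end ConeRankAux

/-- If the cone `K_W` generated by the rows of `W` is pointed, then
`ConeGeneratingRank(W) = ConeSubsetRank(W)`. -/
theorem cgr_eq_csr_of_pointed {m n : ℕ} (W : Matrix (Fin m) (Fin n) ℝ)
    (hpointed : ∀ x ∈ coneOf W, x ≠ 0 → -x ∉ coneOf W) :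
    coneGeneratingRank W = coneSubsetRank W := by
  have hS2ne : {k : ℕ | ∃ V : Matrix (Fin k) (Fin n) ℝ,
      (∀ i : Fin k, ∃ i' : Fin m, V i = W i') ∧ coneOf V = coneOf W}.Nonempty :=
    ⟨m, W, fun i => ⟨i, rfl⟩, rfl⟩
  have hS1ne : {k : ℕ | ∃ V : Matrix (Fin k) (Fin n) ℝ, coneOf V = coneOf W}.Nonempty :=
    ⟨m, W, rfl⟩
  refine le_antisymm ?_ ?_
  · -- cgr ≤ csr
    obtain ⟨V, _, hV⟩ := Nat.sInf_mem hS2ne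
    refine Nat.sInf_le ?_
    exact ⟨V, hV⟩
  · -- csr ≤ cgr
    obtain ⟨V, hV⟩ := Nat.sInf_mem hS1ne
    have hmin : ∀ j, j < coneGeneratingRank W →
        ∀ U : Matrix (Fin j) (Fin n) ℝ, coneOf U ≠ coneOf W := by
      intro j hj U hU
      refine absurd ?_ (Nat.not_le.2 hj)
      refine Nat.sInf_le ?_
      exact ⟨U, hU⟩
    obtain ⟨V', hrows, hV'⟩ :=
      ConeRankAux.exists_subset_rows hpointed (coneGeneratingRank W) V hV hmin
    refine Nat.sInf_le ?_
    exact ⟨V', hrows, hV'⟩
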